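/- Let $x$ be a random variable with $l(t) := \mathbb{E}[x^2 \mathbf{1}_{\{|x| \le t\}}]$ slowly varying at infinity and $\mathbb{E} x^2 = \infty$. Then $\mathbb{E}[|x| \mathbf{1}_{\{|x| > t\}}] = o(l(t)/t)$ as $t \to \infty$. -/

import Mathlib

open MeasureTheory Filter

set_option maxHeartbeats 2000000 in
theorem stmt13 {Ω : Type*} [MeasurableSpace Ω] (P : Measure Ω) [IsProbabilityMeasure P]
    (x : Ω → ℝ) (hx : Measurable x)
    (l : ℝ → ℝ)
    (hl : ∀ t : ℝ, l t = ∫ ω, Set.indicator {ω | |x ω| ≤ t} (fun ω => (x ω) ^ 2) ω ∂P)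
    (hsv : ∀ lam > (0 : ℝ), Tendsto (fun t => l (lam * t) / l t) atTop (nhds 1))
    (hinf : ¬ Integrable (fun ω => (x ω) ^ 2) P) :
    Tendsto (fun t : ℝ =>
      t * (∫ ω, Set.indicator {ω | t < |x ω|} (fun ω => |x ω|) ω ∂P) / l t)
      atTop (nhds 0) := by
  obtain ⟨f, hfdef⟩ : ∃ f : ℝ → ℝ,
      f = fun t => ∫ ω, Set.indicator {ω | t < |x ω|} (fun ω => |x ω|) ω ∂P := ⟨_, rfl⟩
  have hgoal : (fun t : ℝ =>
      t * (∫ ω, Set.indicator {ω | t < |x ω|} (fun ω => |x ω|) ω ∂P) / l t)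
      = fun t : ℝ => t * f t / l t := by simp only [hfdef]
  rw [hgoal]
  have msle : ∀ t : ℝ, MeasurableSet {ω | |x ω| ≤ t} := fun t =>
    measurableSet_le hx.abs measurable_const
  have mslt : ∀ t : ℝ, MeasurableSet {ω | t < |x ω|} := fun t =>
    measurableSet_lt measurable_const hx.abs
  have hxsq : Measurable fun ω => x ω ^ 2 := hx.pow_const 2
  -- integrability of the truncated second moment
  have I1 : ∀ t : ℝ, Integrable (Set.indicator {ω | |x ω| ≤ t} (fun ω => x ω ^ 2)) P := by
    intro t
    refine Integrable.mono' (integrable_const (t ^ 2))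
      ((hxsq.indicator (msle t)).aestronglyMeasurable) (ae_of_all _ ?_)
    intro ω
    by_cases h : ω ∈ {ω | |x ω| ≤ t}
    · rw [Set.indicator_of_mem h, Real.norm_eq_abs, abs_of_nonneg (sq_nonneg _)]
      have h' : |x ω| ≤ t := h
      nlinarith [abs_nonneg (x ω), sq_abs (x ω)]
    · rw [Set.indicator_of_notMem h]
      simp [sq_nonneg]
  -- integrability of the truncated first moment (bounded part)
  have Ible : ∀ t : ℝ, Integrable (Set.indicator {ω | |x ω| ≤ t} (fun ω => |x ω|)) P := by
    intro t
    refine Integrable.mono' (integrable_const (max t 0))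
      ((hx.abs.indicator (msle t)).aestronglyMeasurable) (ae_of_all _ ?_)
    intro ω
    by_cases h : ω ∈ {ω | |x ω| ≤ t}
    · rw [Set.indicator_of_mem h, Real.norm_eq_abs, abs_of_nonneg (abs_nonneg _)]
      exact le_max_of_le_left h
    · rw [Set.indicator_of_notMem h]
      simp [le_max_right]
  have lnn : ∀ t : ℝ, 0 ≤ l t := by
    intro t
    rw [hl t]
    exact integral_nonneg (Set.indicator_nonneg (fun ω _ => sq_nonneg _))
  have lmono : ∀ s t : ℝ, s ≤ t → l s ≤ l t := by
    intro s t hst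
    rw [hl s, hl t]
    refine integral_mono (I1 s) (I1 t) ?_
    intro ω
    exact Set.indicator_le_indicator_of_subset (fun ω h => le_trans h hst)
      (fun ω => sq_nonneg _) ω
  -- eventual positivity of l
  obtain ⟨t₀, ht₀⟩ : ∃ t₀ : ℝ, 0 < l t₀ := by
    by_contra hcon
    push_neg at hcon
    apply hinf
    have hzero : ∀ n : ℕ, (Set.indicator {ω | |x ω| ≤ (n : ℝ)} (fun ω => x ω ^ 2)) =ᵐ[P]
        (0 : Ω → ℝ) := by
      intro n
      rw [← integral_eq_zero_iff_of_nonneg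
        (Set.indicator_nonneg (fun ω _ => sq_nonneg _)) (I1 n), ← hl (n : ℝ)]
      exact le_antisymm (hcon _) (lnn _)
    have hae : ∀ᵐ ω ∂P, ∀ n : ℕ,
        Set.indicator {ω | |x ω| ≤ (n : ℝ)} (fun ω => x ω ^ 2) ω = (0 : Ω → ℝ) ω :=
      (ae_all_iff).mpr hzero
    have hx0 : (fun ω => x ω ^ 2) =ᵐ[P] (0 : Ω → ℝ) := by
      filter_upwards [hae] with ω hω
      have hmem : ω ∈ {ω' | |x ω'| ≤ ((⌈|x ω|⌉₊ : ℕ) : ℝ)} := Set.mem_setOf.mpr (Nat.le_ceil _)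
      have := hω ⌈|x ω|⌉₊
      rwa [Set.indicator_of_mem hmem] at this
    exact (integrable_zero _ _ _).congr hx0.symm
  have lpos : ∀ t : ℝ, t₀ ≤ t → 0 < l t := fun t ht => lt_of_lt_of_le ht₀ (lmono _ _ ht)
  -- split on integrability of |x|
  by_cases H : Integrable (fun ω => |x ω|) P
  · -- main case
    have I2 : ∀ t : ℝ, Integrable (Set.indicator {ω | t < |x ω|} (fun ω => |x ω|)) P :=
      fun t => H.indicator (mslt t)
    have fnn : ∀ t : ℝ, 0 ≤ f t := by
      intro t
      rw [hfdef]
      exact integral_nonneg (Set.indicator_nonneg (fun ω _ => abs_nonneg _))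
    -- key inequality
    have key : ∀ t : ℝ, 0 < t → t * f t ≤ (l (2 * t) - l t) + t * f (2 * t) := by
      intro t ht
      have hpt : ∀ ω, t * Set.indicator {ω | t < |x ω|} (fun ω => |x ω|) ω ≤
          (Set.indicator {ω | |x ω| ≤ 2 * t} (fun ω => x ω ^ 2) ω
            - Set.indicator {ω | |x ω| ≤ t} (fun ω => x ω ^ 2) ω)
          + t * Set.indicator {ω | 2 * t < |x ω|} (fun ω => |x ω|) ω := by
        intro ω
        simp only [Set.indicator_apply, Set.mem_setOf_eq]
        split_ifs <;> nlinarith [sq_abs (x ω), abs_nonneg (x ω)]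
      calc t * f t = ∫ ω, t * Set.indicator {ω | t < |x ω|} (fun ω => |x ω|) ω ∂P := by
            simp only [hfdef]; exact (integral_const_mul t _).symm
        _ ≤ ∫ ω, ((Set.indicator {ω | |x ω| ≤ 2 * t} (fun ω => x ω ^ 2) ω
              - Set.indicator {ω | |x ω| ≤ t} (fun ω => x ω ^ 2) ω)
              + t * Set.indicator {ω | 2 * t < |x ω|} (fun ω => |x ω|) ω) ∂P := by
            refine integral_mono ((I2 t).const_mul t)
              (((I1 (2 * t)).sub (I1 t)).add ((I2 (2 * t)).const_mul t)) hpt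
        _ = (∫ ω, (Set.indicator {ω | |x ω| ≤ 2 * t} (fun ω => x ω ^ 2) ω
              - Set.indicator {ω | |x ω| ≤ t} (fun ω => x ω ^ 2) ω) ∂P)
            + ∫ ω, t * Set.indicator {ω | 2 * t < |x ω|} (fun ω => |x ω|) ω ∂P :=
            integral_add ((I1 (2 * t)).sub (I1 t)) ((I2 (2 * t)).const_mul t)
        _ = (l (2 * t) - l t) + t * f (2 * t) := by
            rw [integral_sub (I1 (2 * t)) (I1 t), integral_const_mul, hl (2 * t), hl t]
            simp only [hfdef]
    -- tail tendsto zero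
    have ftail : ∀ t : ℝ, 0 < t → Tendsto (fun n : ℕ => f ((2 : ℝ) ^ n * t)) atTop (nhds 0) := by
      intro t ht
      have h0 : (0 : ℝ) = ∫ ω, (0 : ℝ) ∂P := by simp
      rw [h0]
      simp only [hfdef]
      refine tendsto_integral_of_dominated_convergence (fun ω => |x ω|)
        (fun n => (hx.abs.indicator (mslt _)).aestronglyMeasurable) H
        (fun n => ae_of_all _ ?_) (ae_of_all _ ?_)
      · intro ω
        rw [Real.norm_eq_abs,
          abs_of_nonneg (Set.indicator_nonneg (fun ω _ => abs_nonneg (x ω)) ω)]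
        exact Set.indicator_le_self' (fun ω _ => abs_nonneg (x ω)) ω
      · intro ω
        obtain ⟨N, hN⟩ : ∃ N : ℕ, |x ω| < (2 : ℝ) ^ N * t := by
          obtain ⟨N, hN⟩ := pow_unbounded_of_one_lt (|x ω| / t) (one_lt_two (α := ℝ))
          exact ⟨N, by rw [← div_lt_iff₀ ht] at *; exact hN⟩
        refine Tendsto.congr' ?_ tendsto_const_nhds
        filter_upwards [eventually_ge_atTop N] with n hn
        have h2 : (2 : ℝ) ^ N * t ≤ (2 : ℝ) ^ n * t :=
          mul_le_mul_of_nonneg_right (pow_le_pow_right₀ one_le_two hn) ht.le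
        have : ω ∉ {ω' | (2 : ℝ) ^ n * t < |x ω'|} := by
          simp only [Set.mem_setOf_eq, not_lt]
          linarith
        rw [Set.indicator_of_notMem this]
    -- final assembly
    rw [NormedAddCommGroup.tendsto_nhds_zero]
    intro ε hε
    obtain ⟨ε', hε'pos, hε'le, h4ε⟩ : ∃ ε' : ℝ, 0 < ε' ∧ ε' ≤ 1 / 4 ∧ 4 * ε' ≤ ε / 2 := by
      refine ⟨min (ε / 8) (1 / 4), lt_min (by linarith) (by norm_num), min_le_right _ _, ?_⟩
      have := min_le_left (ε / 8) (1 / 4)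
      linarith
    have hev : ∀ᶠ t in atTop, l (2 * t) / l t < 1 + ε' := by
      have := hsv 2 two_pos
      exact this.eventually_lt_const (by linarith)
    obtain ⟨T₁, hT₁⟩ := eventually_atTop.mp hev
    obtain ⟨T, hT1, hTt₀, hTT₁⟩ : ∃ T : ℝ, (1 : ℝ) ≤ T ∧ t₀ ≤ T ∧ T₁ ≤ T :=
      ⟨max T₁ (max t₀ 1), le_trans (le_max_right _ _) (le_max_right _ _),
        le_trans (le_max_left _ _) (le_max_right _ _), le_max_left _ _⟩
    have hTratio : ∀ s : ℝ, T ≤ s → l (2 * s) ≤ (1 + ε') * l s := by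
      intro s hs
      have hls : 0 < l s := lpos s (le_trans hTt₀ hs)
      have := hT₁ s (le_trans hTT₁ hs)
      rw [div_lt_iff₀ hls] at this
      linarith
    have growth : ∀ n : ℕ, ∀ s : ℝ, T ≤ s → l ((2 : ℝ) ^ n * s) ≤ (1 + ε') ^ n * l s := by
      intro n
      induction n with
      | zero => intro s hs; simp
      | succ n ih =>
        intro s hs
        have hs0 : (0 : ℝ) < s := lt_of_lt_of_le (by linarith) hs
        have hsn : T ≤ (2 : ℝ) ^ n * s :=
          le_trans hs (le_mul_of_one_le_left hs0.le (one_le_pow₀ one_le_two))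
        have h1 : l ((2 : ℝ) ^ (n + 1) * s) = l (2 * ((2 : ℝ) ^ n * s)) := by
          ring_nf
        rw [h1]
        calc l (2 * ((2 : ℝ) ^ n * s)) ≤ (1 + ε') * l ((2 : ℝ) ^ n * s) := hTratio _ hsn
          _ ≤ (1 + ε') * ((1 + ε') ^ n * l s) := by
              have := ih s hs
              nlinarith [lnn ((2:ℝ) ^ n * s)]
          _ = (1 + ε') ^ (n + 1) * l s := by ring
    have main : ∀ n : ℕ, ∀ t : ℝ, T ≤ t →
        t * f t ≤ ε' * l t * (∑ k ∈ Finset.range n, ((1 + ε') / 2) ^ k)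
          + t * f ((2 : ℝ) ^ n * t) := by
      intro n
      induction n with
      | zero => intro t ht; simp
      | succ n ih =>
        intro t ht
        have ht0 : (0 : ℝ) < t := lt_of_lt_of_le (by linarith) ht
        have hsn : T ≤ (2 : ℝ) ^ n * t :=
          le_trans ht (le_mul_of_one_le_left ht0.le (one_le_pow₀ one_le_two))
        have hsn0 : (0 : ℝ) < (2 : ℝ) ^ n * t := by positivity
        have hkey := key ((2 : ℝ) ^ n * t) hsn0
        have hratio : l (2 * ((2 : ℝ) ^ n * t)) - l ((2 : ℝ) ^ n * t)
            ≤ ε' * ((1 + ε') ^ n * l t) := by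
          have h1 := hTratio _ hsn
          have h2 := growth n t ht
          nlinarith [lnn ((2:ℝ) ^ n * t), mul_le_mul_of_nonneg_left h2 hε'pos.le]
        -- from hkey and hratio: (2^n t) f(2^n t) ≤ ε'(1+ε')^n l t + (2^n t) f(2^{n+1} t)
        have h3 : (2 : ℝ) ^ n * t * f ((2 : ℝ) ^ n * t)
            ≤ ε' * ((1 + ε') ^ n * l t) + (2 : ℝ) ^ n * t * f (2 * ((2 : ℝ) ^ n * t)) := by
          linarith
        have hpowpos : (0 : ℝ) < (2 : ℝ) ^ n := by positivity
        have h4 : t * f ((2 : ℝ) ^ n * t)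
            ≤ ε' * ((1 + ε') / 2) ^ n * l t + t * f ((2 : ℝ) ^ (n + 1) * t) := by
          have heq : (2 : ℝ) ^ (n + 1) * t = 2 * ((2 : ℝ) ^ n * t) := by ring
          rw [heq]
          have h5 : (2 : ℝ) ^ n * (t * f ((2 : ℝ) ^ n * t))
              ≤ (2 : ℝ) ^ n * (ε' * ((1 + ε') / 2) ^ n * l t
                + t * f (2 * ((2 : ℝ) ^ n * t))) := by
            have : (2 : ℝ) ^ n * (ε' * ((1 + ε') / 2) ^ n * l t) = ε' * ((1 + ε') ^ n * l t) := by
              rw [div_pow]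
              field_simp
            linarith
          exact le_of_mul_le_mul_left h5 hpowpos
        have h6 := ih t ht
        rw [Finset.sum_range_succ]
        have h7 : ε' * l t * (∑ k ∈ Finset.range n, ((1 + ε') / 2) ^ k + ((1 + ε') / 2) ^ n)
            = ε' * l t * (∑ k ∈ Finset.range n, ((1 + ε') / 2) ^ k)
              + ε' * ((1 + ε') / 2) ^ n * l t := by ring
        linarith
    have csum : ∀ n : ℕ, (∑ k ∈ Finset.range n, ((1 + ε') / 2) ^ k) ≤ 4 := by
      intro n
      induction n with
      | zero => simp
      | succ n ih =>
        rw [geom_sum_succ]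
        have hρ : (1 + ε') / 2 ≤ 3 / 4 := by
          rw [div_le_div_iff₀] <;> linarith
        have hρ0 : 0 ≤ (1 + ε') / 2 := by positivity
        have hsnn : 0 ≤ ∑ k ∈ Finset.range n, ((1 + ε') / 2) ^ k :=
          Finset.sum_nonneg (fun k _ => pow_nonneg hρ0 k)
        have h1 := mul_le_mul_of_nonneg_right hρ hsnn
        have h2 : (3 / 4 : ℝ) * (∑ k ∈ Finset.range n, ((1 + ε') / 2) ^ k) ≤ 3 / 4 * 4 :=
          mul_le_mul_of_nonneg_left ih (by norm_num)
        linarith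
    have bound4 : ∀ t : ℝ, T ≤ t → t * f t ≤ 4 * ε' * l t := by
      intro t ht
      have ht0 : (0 : ℝ) < t := lt_of_lt_of_le (by linarith) ht
      have htends : Tendsto (fun n : ℕ => ε' * l t * 4 + t * f ((2 : ℝ) ^ n * t))
          atTop (nhds (ε' * l t * 4 + t * 0)) :=
        tendsto_const_nhds.add ((ftail t ht0).const_mul t)
      have hle : ∀ n : ℕ, t * f t ≤ ε' * l t * 4 + t * f ((2 : ℝ) ^ n * t) := by
        intro n
        have h1 := main n t ht
        have h2 := csum n
        nlinarith [mul_nonneg hε'pos.le (lnn t)]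
      have := ge_of_tendsto' htends hle
      linarith
    filter_upwards [eventually_ge_atTop T] with t ht
    show ‖t * f t / l t‖ < ε
    have ht0 : (0 : ℝ) < t := lt_of_lt_of_le (by linarith) ht
    have hlt : 0 < l t := lpos t (le_trans hTt₀ ht)
    have hb := bound4 t ht
    have hnn : 0 ≤ t * f t / l t := div_nonneg (mul_nonneg ht0.le (fnn t)) hlt.le
    rw [Real.norm_eq_abs, abs_of_nonneg hnn, div_lt_iff₀ hlt]
    nlinarith [h4ε]
  · -- degenerate case: |x| not integrable, all tail integrals are zero
    have hzero : ∀ t : ℝ, f t = 0 := by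
      intro t
      rw [hfdef]
      refine integral_undef ?_
      intro hint
      apply H
      have heq : (fun ω => |x ω|) = fun ω =>
          Set.indicator {ω | |x ω| ≤ t} (fun ω => |x ω|) ω
            + Set.indicator {ω | t < |x ω|} (fun ω => |x ω|) ω := by
        funext ω
        by_cases h : |x ω| ≤ t
        · rw [Set.indicator_of_mem (Set.mem_setOf.mpr h : ω ∈ {ω' | |x ω'| ≤ t}),
            Set.indicator_of_notMem
              (by simp only [Set.mem_setOf_eq, not_lt]; exact h :
                ω ∉ {ω' | t < |x ω'|})]
          ring
        · rw [Set.indicator_of_notMem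
              (by simp only [Set.mem_setOf_eq]; exact h : ω ∉ {ω' | |x ω'| ≤ t}),
            Set.indicator_of_mem
              (Set.mem_setOf.mpr (not_le.mp h) : ω ∈ {ω' | t < |x ω'|})]
          ring
      rw [heq]
      exact (Ible t).add hint
    have : (fun t : ℝ => t * f t / l t) = fun _ => (0 : ℝ) := by
      funext t
      rw [hzero t]
      simp
    rw [this]
    exact tendsto_const_nhds
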